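/- Let p ≥ 1 be an integer and θ ∈ ℝ. If p is odd, then cos^p(θ + π/3) = cos^p(θ − π/3) if and only if θ = kπ for some k ∈ ℤ. If p is even, then cos^p(θ + π/3) = cos^p(θ − π/3) if and only if θ = kπ/2 for some k ∈ ℤ. -/
import Mathlib

open Real

private lemma cos_add_pi3 (θ : ℝ) :
    Real.cos (θ + Real.pi / 3) = Real.cos θ * (1/2) - Real.sin θ * (Real.sqrt 3 / 2) := by
  rw [Real.cos_add, Real.cos_pi_div_three, Real.sin_pi_div_three]

private lemma cos_sub_pi3 (θ : ℝ) :
    Real.cos (θ - Real.pi / 3) = Real.cos θ * (1/2) + Real.sin θ * (Real.sqrt 3 / 2) := by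
  rw [Real.cos_sub, Real.cos_pi_div_three, Real.sin_pi_div_three]

/-- Characterization of the vanishing of the imaginary part of `f(e^{iθ})` in
Appendix D.1 (Lemma 3.1): `cos^p(θ+π/3) = cos^p(θ−π/3)` iff `θ ∈ πℤ` (p odd)
resp. `θ ∈ (π/2)ℤ` (p even). -/
theorem stmt_10 (p : ℕ) (hp : 1 ≤ p) (θ : ℝ) :
    (Odd p →
      (Real.cos (θ + Real.pi / 3) ^ p = Real.cos (θ - Real.pi / 3) ^ p ↔
        ∃ k : ℤ, θ = k * Real.pi)) ∧
    (Even p →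
      (Real.cos (θ + Real.pi / 3) ^ p = Real.cos (θ - Real.pi / 3) ^ p ↔
        ∃ k : ℤ, θ = k * (Real.pi / 2))) := by
  have h3 : (0:ℝ) < Real.sqrt 3 := Real.sqrt_pos.mpr (by norm_num)
  constructor
  · intro hodd
    have hinj := (hodd.strictMono_pow (R := ℝ)).injective
    constructor
    · intro h
      have hab := hinj h
      rw [cos_add_pi3, cos_sub_pi3] at hab
      have hs : Real.sin θ = 0 := by nlinarith
      obtain ⟨n, hn⟩ := Real.sin_eq_zero_iff.mp hs
      exact ⟨n, hn.symm⟩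
    · rintro ⟨k, rfl⟩
      have hs0 : Real.sin ((k:ℝ) * Real.pi) = 0 := Real.sin_eq_zero_iff.mpr ⟨k, rfl⟩
      have heq : Real.cos ((k:ℝ) * Real.pi + Real.pi / 3)
          = Real.cos ((k:ℝ) * Real.pi - Real.pi / 3) := by
        rw [cos_add_pi3, cos_sub_pi3, hs0]; ring
      rw [heq]
  · intro heven
    have key : Real.cos (θ + Real.pi / 3) ^ p = Real.cos (θ - Real.pi / 3) ^ p ↔
        Real.sin θ * Real.cos θ = 0 := by
      rw [← heven.pow_abs, ← heven.pow_abs (Real.cos (θ - Real.pi / 3)),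
        pow_left_inj₀ (abs_nonneg _) (abs_nonneg _) (by omega), abs_eq_abs,
        cos_add_pi3, cos_sub_pi3]
      constructor
      · rintro (h | h)
        · have hs : Real.sin θ = 0 := by nlinarith
          rw [hs]; ring
        · have hc : Real.cos θ = 0 := by nlinarith
          rw [hc]; ring
      · intro h
        rcases mul_eq_zero.mp h with hs | hc
        · left; rw [hs]; ring
        · right; rw [hc]; ring
    rw [key]
    have h2 : Real.sin θ * Real.cos θ = 0 ↔ Real.sin (2 * θ) = 0 := by
      rw [Real.sin_two_mul]
      constructor <;> intro h <;> nlinarith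
    rw [h2, Real.sin_eq_zero_iff]
    constructor
    · rintro ⟨n, hn⟩
      exact ⟨n, by linarith⟩
    · rintro ⟨k, rfl⟩
      exact ⟨k, by ring⟩
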